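/- (Lemma 3.4) Under the standing hypotheses on F, R, e, q, the maps δ⁽ᵏ⁾ and σ (in particular the generalized Lie Leibniz rule (iii) for two factors and δ⁽ᵏ⁾(e) = 0 for 1 ≤ k ≤ q−1), there exist s ∈ R and z ∈ Z(R) = F·1 such that σ(e) = [s,e] + z = se − es + z. -/

import Mathlib

/-- Lemma 3.4: under the standing hypotheses, `σ(e) = [s,e] + z` for some `s ∈ R`
and `z ∈ Z(R) = F·1`.  Here `D k` for `1 ≤ k ≤ q-1` are the maps `δ⁽ᵏ⁾`, `D 0 = id`,
and `D q = σ`. -/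
theorem stmt_2 {F : Type*} [Field F] {p : ℕ} [CharP F p] (hp2 : p ≠ 2)
    {n : ℕ} (hn : 2 ≤ n)
    (e : Matrix (Fin n) (Fin n) F) (he : e * e = e) (he0 : e ≠ 0) (he1 : e ≠ 1)
    (q : ℕ) (hq : 2 ≤ q)
    (D : ℕ → Matrix (Fin n) (Fin n) F →ₗ[F] Matrix (Fin n) (Fin n) F)
    (hD0 : D 0 = LinearMap.id)
    (hDe : ∀ k, 1 ≤ k → k ≤ q - 1 → D k e = 0)
    (hLeib : ∀ m, 1 ≤ m → m ≤ q - 1 → ∀ x y,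
      D m (x * y) = ∑ k ∈ Finset.range (m + 1), D k x * D (m - k) y)
    (hLie2 : ∀ x y, D q (x * y - y * x) =
      ∑ k ∈ Finset.range (q + 1), (D k x * D (q - k) y - D (q - k) y * D k x))
    (hLie3 : ∀ x y w, D q (x * (y * w - w * y) - (y * w - w * y) * x) =
      ∑ k ∈ Finset.range (q + 1), ∑ l ∈ Finset.range (q + 1 - k),
        (D k x * (D l y * D (q - k - l) w - D (q - k - l) w * D l y) -
          (D l y * D (q - k - l) w - D (q - k - l) w * D l y) * D k x)) :
    ∃ (s : Matrix (Fin n) (Fin n) F) (c : F),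
      D q e = (s * e - e * s) + c • (1 : Matrix (Fin n) (Fin n) F) := by
  obtain ⟨a, ha⟩ : ∃ a, a = D q e := ⟨_, rfl⟩
  obtain ⟨f, hfdef⟩ : ∃ f, f = 1 - e := ⟨_, rfl⟩
  have hff : f * f = f := by rw [hfdef]; simp [mul_sub, sub_mul, he]
  have hef : e * f = 0 := by rw [hfdef]; simp [mul_sub, he]
  have hfe : f * e = 0 := by rw [hfdef]; simp [sub_mul, he]
  have hE : ∀ y, e * (e * y) = e * y := fun y => by rw [← mul_assoc, he]
  have hF : ∀ y, f * (f * y) = f * y := fun y => by rw [← mul_assoc, hff]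
  have hEF : ∀ y, e * (f * y) = 0 := fun y => by rw [← mul_assoc, hef, zero_mul]
  have hFE : ∀ y, f * (e * y) = 0 := fun y => by rw [← mul_assoc, hfe, zero_mul]
  have hD0' : ∀ y, D 0 y = y := fun y => by rw [hD0]; rfl
  -- key identity (∗): σ([e,w]) = [e,σ(w)] + [σ(e),w]
  have key : ∀ w, D q (e * w - w * e) =
      (e * D q w - D q w * e) + (a * w - w * a) := by
    intro w
    rw [hLie2 e w]
    rw [Finset.sum_eq_add 0 q (by omega)
      (fun c hc ⟨hc0, hcq⟩ => by
        rw [hDe c (by omega) (by simp at hc; omega)]; simp)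
      (by simp) (by simp)]
    simp [hD0', ← ha]
  -- corner identities
  have h11 : ∀ x, e * (a * (e * (x * e))) = e * (x * (e * (a * e))) := by
    intro x
    have h := key (e * (x * e))
    have h0 : e * (e * (x * e)) - e * (x * e) * e = 0 := by
      simp [mul_assoc, he, hE]
    rw [h0, map_zero] at h
    have h2 := congrArg (fun z => e * z * e) h.symm
    simpa [mul_assoc, mul_add, add_mul, mul_sub, sub_mul, he, hE, hEF, hFE, hF,
      sub_eq_zero] using h2
  have h22 : ∀ x, f * (a * (f * (x * f))) = f * (x * (f * (a * f))) := by
    intro x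
    have h := key (f * (x * f))
    have h0 : e * (f * (x * f)) - f * (x * f) * e = 0 := by
      simp [mul_assoc, hef, hfe, hEF]
    rw [h0, map_zero] at h
    have h2 := congrArg (fun z => f * z * f) h.symm
    simpa [mul_assoc, mul_add, add_mul, mul_sub, sub_mul, he, hff, hef, hfe, hE, hEF, hFE, hF,
      sub_eq_zero] using h2
  have h12 : ∀ x, e * (a * (e * (x * f))) = e * (x * (f * (a * f))) := by
    intro x
    have h0 : e * (e * (x * f)) - e * (x * f) * e = e * (x * f) := by
      simp [mul_assoc, hE, hef, hfe]
    have h := key (e * (x * f))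
    rw [h0] at h
    have h2 := congrArg (fun z => e * z * f) h
    simpa [mul_assoc, mul_add, add_mul, mul_sub, sub_mul, he, hff, hef, hfe, hE, hEF, hFE, hF,
      sub_eq_zero, left_eq_add] using h2
  have h21 : ∀ x, f * (a * (f * (x * e))) = f * (x * (e * (a * e))) := by
    intro x
    have h0 : e * (f * (x * e)) - f * (x * e) * e = -(f * (x * e)) := by
      simp [mul_assoc, hE, he, hef, hfe, hEF]
    have h := key (f * (x * e))
    rw [h0, map_neg] at h
    have h2 := congrArg (fun z => f * z * e) h
    simpa [mul_assoc, mul_add, add_mul, mul_sub, sub_mul, he, hff, hef, hfe, hE, hEF, hFE, hF,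
      sub_eq_zero, left_eq_add, neg_eq_iff_eq_neg, eq_comm] using h2
  -- the diagonal part commutes with everything
  have hcomm : ∀ x, (e * (a * e) + f * (a * f)) * x = x * (e * (a * e) + f * (a * f)) := by
    intro x
    have hx : x = e * (x * e) + e * (x * f) + f * (x * e) + f * (x * f) := by
      have h1 : e + f = 1 := by rw [hfdef]; abel
      calc x = (e + f) * x * (e + f) := by rw [h1]; noncomm_ring
        _ = _ := by noncomm_ring
    conv_lhs => rw [hx]
    conv_rhs => rw [hx]
    simp only [mul_add, add_mul, mul_assoc, hE, hF, hEF, hFE, mul_zero, zero_mul,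
      add_zero, zero_add]
    rw [h11, h12, h21, h22]
    abel
  -- hence it is a scalar
  obtain ⟨c, hc⟩ := Matrix.mem_range_scalar_of_commute_single
    (M := e * (a * e) + f * (a * f))
    (fun i j _ => ((hcomm _).symm : Commute _ _))
  refine ⟨f * (a * e) - e * (a * f), c, ?_⟩
  have hscal : (Matrix.scalar (Fin n)) c = c • (1 : Matrix (Fin n) (Fin n) F) := by
    ext i j
    simp [Matrix.scalar_apply, Matrix.smul_apply, Matrix.one_apply, Matrix.diagonal_apply]
  rw [← ha, ← hscal, hc]
  have hsum : e * (a * e) + e * (a * f) + f * (a * e) + f * (a * f) = a := by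
    have h1 : e + f = 1 := by rw [hfdef]; abel
    calc e * (a * e) + e * (a * f) + f * (a * e) + f * (a * f)
        = (e + f) * a * (e + f) := by noncomm_ring
      _ = a := by rw [h1]; noncomm_ring
  simp only [sub_mul, mul_sub, mul_assoc, hE, hF, hEF, hFE, he, hff, hef, hfe,
    mul_zero, zero_mul, sub_zero, zero_sub, sub_neg_eq_add]
  linear_combination (norm := noncomm_ring) hsum.symm
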